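/- (Weak stage order removes order reduction exactly for polynomial Prothero–Robinson data.) Let (A, b) be an s-stage RK scheme with c = A e satisfying the quadrature conditions B(q): b^T c^{k−1} = 1/k for k = 1, …, q. Let λ ∈ ℝ, Δt ∈ ℝ, ζ = λΔt with I − ζA invertible, and suppose b^T (I − ζA)^{-1} τ^(k) = 0 for k = 1, …, q (which holds in particular if the scheme has weak stage order at least q). Let φ : ℝ → ℝ be a polynomial of degree at most q. If g ∈ ℝ^s and u_{n+1} ∈ ℝ satisfy the RK stage and update equations for the right-hand side f(t,u) = λ(u − φ(t)) + φ'(t) starting from u_n at time t_n, then u_{n+1} − φ(t_n + Δt) = R(ζ) (u_n − φ(t_n)). In particular, if u_n = φ(t_n) then u_{n+1} = φ(t_n + Δt): the scheme reproduces the exact solution with zero error for every step size and every stiffness λ. -/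

import Mathlib

open Matrix

/-- Weak stage order removes order reduction exactly for polynomial Prothero–Robinson
data: under the quadrature conditions `B(q)` and the annihilation conditions
`bᵀ (I − ζA)⁻¹ τ⁽ᵏ⁾ = 0` (`1 ≤ k ≤ q`), for any polynomial `φ` of degree ≤ `q`,
one RK step for `f(t,u) = λ(u − φ(t)) + φ'(t)` satisfies
`u_{n+1} − φ(t_n + Δt) = R(ζ)(u_n − φ(t_n))`; in particular if `u_n = φ(t_n)` then
`u_{n+1} = φ(t_n + Δt)`. -/
theorem stmt15 {s : ℕ} (A : Matrix (Fin s) (Fin s) ℝ) (b : Fin s → ℝ)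
    (c : Fin s → ℝ) (hc : c = A.mulVec fun _ => 1)
    (q : ℕ) (hq : 1 ≤ q)
    (hB : ∀ k, 1 ≤ k → k ≤ q → (b ⬝ᵥ fun i => c i ^ (k - 1)) = (k : ℝ)⁻¹)
    (lam Δt tn : ℝ) (ζ : ℝ) (hζ : ζ = lam * Δt)
    (hinv : (1 - ζ • A).det ≠ 0)
    (τ : ℕ → Fin s → ℝ)
    (hτ : ∀ k, τ k = A.mulVec (fun i => c i ^ (k - 1)) - (k : ℝ)⁻¹ • fun i => c i ^ k)
    (hwso : ∀ k, 1 ≤ k → k ≤ q → b ⬝ᵥ (1 - ζ • A)⁻¹.mulVec (τ k) = 0)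
    (φ : Polynomial ℝ) (hφ : φ.natDegree ≤ q)
    (un : ℝ) (g : Fin s → ℝ) (un1 : ℝ)
    (hg : ∀ i, g i = un + Δt * ∑ j, A i j *
      (lam * (g j - φ.eval (tn + c j * Δt)) +
        (Polynomial.derivative φ).eval (tn + c j * Δt)))
    (hu : un1 = un + Δt * ∑ j, b j *
      (lam * (g j - φ.eval (tn + c j * Δt)) +
        (Polynomial.derivative φ).eval (tn + c j * Δt)))
    (R : ℝ) (hR : R = 1 + ζ * (b ⬝ᵥ (1 - ζ • A)⁻¹.mulVec fun _ => 1)) :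
    un1 - φ.eval (tn + Δt) = R * (un - φ.eval tn) ∧
      (un = φ.eval tn → un1 = φ.eval (tn + Δt)) := by
  have hdet : IsUnit (1 - ζ • A).det := isUnit_iff_ne_zero.mpr hinv
  set M : Matrix (Fin s) (Fin s) ℝ := 1 - ζ • A with hM
  set ψ : Polynomial ℝ := Polynomial.taylor tn φ with hψ
  set α : ℕ → ℝ := fun k => ψ.coeff k * Δt ^ k with hα
  -- Taylor expansion of φ around tn
  have hevalA : ∀ x : ℝ, φ.eval (tn + x * Δt) = ∑ k ∈ Finset.range (q+1), α k * x ^ k := by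
    intro x
    have h1 : φ.eval (tn + x * Δt) = ψ.eval (x * Δt) := by
      rw [hψ, Polynomial.taylor_eval]; ring_nf
    have hdeg : ψ.natDegree < q + 1 := by
      rw [hψ, Polynomial.natDegree_taylor]; omega
    rw [h1, Polynomial.eval_eq_sum_range' hdeg]
    exact Finset.sum_congr rfl fun k _ => by rw [hα]; ring
  have hderiv : Polynomial.derivative ψ = Polynomial.taylor tn (Polynomial.derivative φ) := by
    rw [hψ, Polynomial.taylor_apply, Polynomial.taylor_apply, Polynomial.derivative_comp]
    simp
  have hevalB : ∀ x : ℝ, Δt * (Polynomial.derivative φ).eval (tn + x * Δt)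
      = ∑ k ∈ Finset.range (q+1), (k : ℝ) * α k * x ^ (k-1) := by
    intro x
    have h1 : (Polynomial.derivative φ).eval (tn + x * Δt)
        = (Polynomial.derivative ψ).eval (x * Δt) := by
      rw [hderiv, Polynomial.taylor_eval]; ring_nf
    have hdeg : (Polynomial.derivative ψ).natDegree < q := by
      have h2 := Polynomial.natDegree_derivative_le ψ
      have h3 : ψ.natDegree ≤ q := by rw [hψ, Polynomial.natDegree_taylor]; exact hφ
      omega
    rw [h1, Polynomial.eval_eq_sum_range' hdeg, Finset.mul_sum,
      Finset.sum_range_succ' (fun k => (k : ℝ) * α k * x ^ (k-1)) q]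
    simp only [Nat.cast_zero, zero_mul, add_zero, Nat.add_sub_cancel]
    refine Finset.sum_congr rfl fun k _ => ?_
    rw [Polynomial.coeff_derivative, hα]
    push_cast
    ring
  have hα0 : α 0 = φ.eval tn := by
    rw [hα]; simp [hψ, Polynomial.taylor_coeff_zero]
  -- the stage error vector
  set e : Fin s → ℝ := fun i => g i - φ.eval (tn + c i * Δt) with he
  set v : Fin s → ℝ :=
    (un - φ.eval tn) • (fun _ : Fin s => (1:ℝ))
      + ∑ k ∈ Finset.range (q+1), ((k : ℝ) * α k) • τ k with hv
  have hsumid : ∀ x : ℝ, ∑ k ∈ Finset.range (q+1), α k * x ^ k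
      = α 0 + ∑ k ∈ Finset.range (q+1), (k : ℝ) * α k * ((k : ℝ)⁻¹ * x ^ k) := by
    intro x
    rw [Finset.sum_range_succ' (fun k => α k * x ^ k) q,
      Finset.sum_range_succ' (fun k => (k : ℝ) * α k * ((k : ℝ)⁻¹ * x ^ k)) q]
    have h2 : ∀ k ∈ Finset.range q,
        α (k+1) * x ^ (k+1) = ((k+1 : ℕ) : ℝ) * α (k+1) * ((((k+1:ℕ)) : ℝ)⁻¹ * x ^ (k+1)) := by
      intro k _
      have : (((k+1:ℕ)) : ℝ) ≠ 0 := by exact_mod_cast Nat.succ_ne_zero k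
      field_simp
    rw [Finset.sum_congr rfl h2]
    push_cast
    ring
  have hMe : M.mulVec e = v := by
    funext i
    have hgi := hg i
    have split : Δt * ∑ j, A i j * (lam * (g j - φ.eval (tn + c j * Δt)) +
          (Polynomial.derivative φ).eval (tn + c j * Δt))
        = lam * Δt * (∑ j, A i j * e j)
          + ∑ j, A i j * (Δt * (Polynomial.derivative φ).eval (tn + c j * Δt)) := by
      rw [Finset.mul_sum, Finset.mul_sum, ← Finset.sum_add_distrib]
      refine Finset.sum_congr rfl fun j _ => ?_
      simp only [he]
      ring
    have estage : e i = un - φ.eval (tn + c i * Δt) + ζ * (∑ j, A i j * e j)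
        + ∑ j, A i j * (Δt * (Polynomial.derivative φ).eval (tn + c j * Δt)) := by
      rw [he]
      simp only
      rw [hgi, split, hζ]
      ring
    have lhs : M.mulVec e i = e i - ζ * (∑ j, A i j * e j) := by
      simp only [hM, Matrix.sub_mulVec, Matrix.one_mulVec, Matrix.smul_mulVec,
        Pi.sub_apply, Pi.smul_apply, smul_eq_mul]
      simp [Matrix.mulVec, dotProduct]
    rw [lhs, estage]
    have rhs : v i = un - α 0 + ∑ k ∈ Finset.range (q+1),
        ((k : ℝ) * α k * ((∑ j, A i j * c j ^ (k-1)) - (k : ℝ)⁻¹ * c i ^ k)) := by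
      rw [hv, hα0]
      simp only [Pi.add_apply, Pi.smul_apply, Finset.sum_apply, smul_eq_mul, mul_one]
      congr 1
      refine Finset.sum_congr rfl fun k _ => ?_
      rw [hτ k]
      simp [Matrix.mulVec, dotProduct, mul_sub, mul_assoc]
    rw [rhs]
    have swap : ∑ j, A i j * (Δt * (Polynomial.derivative φ).eval (tn + c j * Δt))
        = ∑ k ∈ Finset.range (q+1), (k : ℝ) * α k * (∑ j, A i j * c j ^ (k-1)) := by
      have : ∀ j ∈ (Finset.univ : Finset (Fin s)),
          A i j * (Δt * (Polynomial.derivative φ).eval (tn + c j * Δt))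
          = ∑ k ∈ Finset.range (q+1), (k : ℝ) * α k * (A i j * c j ^ (k-1)) := by
        intro j _
        rw [hevalB (c j), Finset.mul_sum]
        exact Finset.sum_congr rfl fun k _ => by ring
      rw [Finset.sum_congr rfl this, Finset.sum_comm]
      refine Finset.sum_congr rfl fun k _ => ?_
      rw [Finset.mul_sum]
    rw [swap, hevalA (c i), hsumid (c i)]
    have expand : ∑ k ∈ Finset.range (q+1),
        ((k : ℝ) * α k * ((∑ j, A i j * c j ^ (k-1)) - (k : ℝ)⁻¹ * c i ^ k))
        = ∑ k ∈ Finset.range (q+1), (k : ℝ) * α k * (∑ j, A i j * c j ^ (k-1))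
          - ∑ k ∈ Finset.range (q+1), (k : ℝ) * α k * ((k : ℝ)⁻¹ * c i ^ k) := by
      rw [← Finset.sum_sub_distrib]
      exact Finset.sum_congr rfl fun k _ => by ring
    rw [expand]
    ring
  have he2 : e = M⁻¹.mulVec v := by
    rw [← hMe, Matrix.mulVec_mulVec, Matrix.nonsing_inv_mul M hdet, Matrix.one_mulVec]
  have hLsum : ∀ (t : Finset ℕ) (w : ℕ → Fin s → ℝ),
      b ⬝ᵥ M⁻¹.mulVec (∑ k ∈ t, w k) = ∑ k ∈ t, b ⬝ᵥ M⁻¹.mulVec (w k) := by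
    intro t w
    induction t using Finset.induction_on with
    | empty => simp
    | insert _ _ h ih =>
        rw [Finset.sum_insert h, Matrix.mulVec_add, dotProduct_add, ih, Finset.sum_insert h]
  have hbe : b ⬝ᵥ e = (un - φ.eval tn) * (b ⬝ᵥ M⁻¹.mulVec fun _ => 1) := by
    rw [he2, hv, Matrix.mulVec_add, dotProduct_add, Matrix.mulVec_smul, dotProduct_smul,
      smul_eq_mul, hLsum]
    have hzero : ∑ k ∈ Finset.range (q+1), b ⬝ᵥ M⁻¹.mulVec (((k : ℝ) * α k) • τ k) = 0 := by
      refine Finset.sum_eq_zero fun k hk => ?_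
      rw [Matrix.mulVec_smul, dotProduct_smul, smul_eq_mul]
      rcases Nat.eq_zero_or_pos k with h0 | h1
      · simp [h0]
      · rw [hwso k h1 (Nat.lt_succ_iff.mp (Finset.mem_range.mp hk))]; ring
    rw [hzero, add_zero]
  -- the update equation
  have splitb : Δt * ∑ j, b j * (lam * (g j - φ.eval (tn + c j * Δt)) +
        (Polynomial.derivative φ).eval (tn + c j * Δt))
      = lam * Δt * (b ⬝ᵥ e)
        + ∑ j, b j * (Δt * (Polynomial.derivative φ).eval (tn + c j * Δt)) := by
    simp only [dotProduct]
    rw [Finset.mul_sum, Finset.mul_sum, ← Finset.sum_add_distrib]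
    refine Finset.sum_congr rfl fun j _ => ?_
    simp only [he]
    ring
  have swapb : ∑ j, b j * (Δt * (Polynomial.derivative φ).eval (tn + c j * Δt))
      = ∑ k ∈ Finset.range (q+1), (k : ℝ) * α k * (b ⬝ᵥ fun i => c i ^ (k-1)) := by
    have h1 : ∀ j ∈ (Finset.univ : Finset (Fin s)),
        b j * (Δt * (Polynomial.derivative φ).eval (tn + c j * Δt))
        = ∑ k ∈ Finset.range (q+1), (k : ℝ) * α k * (b j * c j ^ (k-1)) := by
      intro j _
      rw [hevalB (c j), Finset.mul_sum]
      exact Finset.sum_congr rfl fun k _ => by ring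
    rw [Finset.sum_congr rfl h1, Finset.sum_comm]
    refine Finset.sum_congr rfl fun k _ => ?_
    simp only [dotProduct]
    rw [Finset.mul_sum]
  have hval : ∑ k ∈ Finset.range (q+1), (k : ℝ) * α k * (b ⬝ᵥ fun i => c i ^ (k-1))
      = φ.eval (tn + Δt) - φ.eval tn := by
    have h1 : ∀ k ∈ Finset.range (q+1),
        (k : ℝ) * α k * (b ⬝ᵥ fun i => c i ^ (k-1))
        = (k : ℝ) * α k * ((k : ℝ)⁻¹ * (1:ℝ) ^ k) := by
      intro k hk
      rcases Nat.eq_zero_or_pos k with h0 | h1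
      · simp [h0]
      · rw [hB k h1 (Nat.lt_succ_iff.mp (Finset.mem_range.mp hk))]
        ring
    rw [Finset.sum_congr rfl h1]
    have h2 := hsumid 1
    rw [← hevalA 1, one_mul, hα0] at h2
    linarith
  have main : un1 - φ.eval (tn + Δt) = R * (un - φ.eval tn) := by
    rw [hu, splitb, swapb, hval, hbe, hR, hζ]
    ring
  exact ⟨main, fun h => by have := main; rw [h, sub_self, mul_zero, sub_eq_zero] at this; exact this⟩
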